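/- For every n ≥ 6 and every solvable group Σ, every group homomorphism f : K_n →* Σ is trivial (f sends every element to 1). -/

import Mathlib

def braidRels (n : ℕ) : Set (FreeGroup (Fin (n - 1))) :=
  {r | (∃ i j : Fin (n - 1), 2 ≤ |(i : ℤ) - (j : ℤ)| ∧
        r = FreeGroup.of i * FreeGroup.of j * (FreeGroup.of i)⁻¹ * (FreeGroup.of j)⁻¹) ∨
       (∃ i j : Fin (n - 1), |(i : ℤ) - (j : ℤ)| = 1 ∧
        r = FreeGroup.of i * FreeGroup.of j * FreeGroup.of i *
            (FreeGroup.of j)⁻¹ * (FreeGroup.of i)⁻¹ * (FreeGroup.of j)⁻¹)}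

/-- The braid group `B n` on `n` strands, presented with generators `σ_1, …, σ_{n-1}`. -/
abbrev BraidGroup (n : ℕ) : Type := PresentedGroup (braidRels n)

/-- The generator `σ_{i+1}` of the braid group. -/
def braidGen {n : ℕ} (i : Fin (n - 1)) : BraidGroup n := PresentedGroup.of i

namespace BraidAux

open scoped commutatorElement

/-! ### Pure group-theoretic computations -/

section Calc

variable {G : Type*} [Group G] (x y : G)

lemma calc_conj (h : x * y * x = y * x * y) :
    y * x⁻¹ = ⁅x * y, x⁆ := by
  have e : ⁅x * y, x⁆ = (x * y * x) * (y⁻¹ * x⁻¹ * x⁻¹) := by group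
  rw [e, h]; group

lemma calc_comm_fix (h : x * y = y * x) :
    x * (y * x⁻¹) * x⁻¹ = y * x⁻¹ := by
  have e : x * (y * x⁻¹) * x⁻¹ = (x * y) * (x⁻¹ * x⁻¹) := by group
  rw [e, h]; group

lemma calc_braid_tau (h : x * y * x = y * x * y) :
    x * (x * (y * x⁻¹) * x⁻¹) * x⁻¹ = (y * x⁻¹)⁻¹ * (x * (y * x⁻¹) * x⁻¹) := by
  have e : (y * x⁻¹)⁻¹ * (x * (y * x⁻¹) * x⁻¹) =
      x * y⁻¹ * (x * y * x) * (x⁻¹ * x⁻¹ * x⁻¹) := by group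
  rw [e, h]; group

end Calc

/-! ### Relations in the braid group -/

section Braid

variable {n : ℕ}

lemma braid_rel_comm (i j : Fin (n - 1)) (h : 2 ≤ |(i : ℤ) - (j : ℤ)|) :
    braidGen i * braidGen j = braidGen j * braidGen i := by
  have h1 : PresentedGroup.mk (braidRels n)
      (FreeGroup.of i * FreeGroup.of j * (FreeGroup.of i)⁻¹ * (FreeGroup.of j)⁻¹) = 1 := by
    apply (QuotientGroup.eq_one_iff _).mpr
    exact Subgroup.subset_normalClosure (Or.inl ⟨i, j, h, rfl⟩)
  rw [← commutatorElement_eq_one_iff_mul_comm]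
  simp only [map_mul, map_inv] at h1
  simp only [commutatorElement_def]
  exact h1

lemma braid_rel_braid (i j : Fin (n - 1)) (h : |(i : ℤ) - (j : ℤ)| = 1) :
    braidGen i * braidGen j * braidGen i = braidGen j * braidGen i * braidGen j := by
  have h1 : PresentedGroup.mk (braidRels n)
      (FreeGroup.of i * FreeGroup.of j * FreeGroup.of i *
        (FreeGroup.of j)⁻¹ * (FreeGroup.of i)⁻¹ * (FreeGroup.of j)⁻¹) = 1 := by
    apply (QuotientGroup.eq_one_iff _).mpr
    exact Subgroup.subset_normalClosure (Or.inr ⟨i, j, h, rfl⟩)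
  simp only [map_mul, map_inv] at h1
  have h2 : (braidGen i * braidGen j * braidGen i) * (braidGen j * braidGen i * braidGen j)⁻¹
      = 1 := by
    rw [show (braidGen i * braidGen j * braidGen i) * (braidGen j * braidGen i * braidGen j)⁻¹
      = braidGen i * braidGen j * braidGen i * (braidGen j)⁻¹ * (braidGen i)⁻¹ * (braidGen j)⁻¹
      from by group]
    exact h1
  exact mul_inv_eq_one.mp h2

instance : (derivedSeries (BraidGroup n) 2).Normal := derivedSeries_normal _ _

/-- The metabelianization of the braid group. -/
abbrev BQ (n : ℕ) : Type := BraidGroup n ⧸ derivedSeries (BraidGroup n) 2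

/-- Image of the `k`-th generator in `BQ n` (junk value `1` if out of range). -/
noncomputable def sq (n : ℕ) (k : ℕ) : BQ n :=
  if h : k < n - 1 then QuotientGroup.mk' _ (braidGen ⟨k, h⟩) else 1

lemma sq_of_lt {k : ℕ} (h : k < n - 1) :
    sq n k = QuotientGroup.mk' _ (braidGen ⟨k, h⟩) := dif_pos h

lemma sq_comm {i j : ℕ} (hi : i < n - 1) (hj : j < n - 1) (hd : 2 ≤ |(i : ℤ) - (j : ℤ)|) :
    sq n i * sq n j = sq n j * sq n i := by
  rw [sq_of_lt hi, sq_of_lt hj, ← map_mul, ← map_mul,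
    braid_rel_comm ⟨i, hi⟩ ⟨j, hj⟩ (by simpa using hd)]

lemma sq_braid {i : ℕ} (hi : i + 1 < n - 1) :
    sq n i * sq n (i + 1) * sq n i = sq n (i + 1) * sq n i * sq n (i + 1) := by
  have hi' : i < n - 1 := by omega
  rw [sq_of_lt hi', sq_of_lt hi, ← map_mul, ← map_mul, ← map_mul, ← map_mul,
    braid_rel_braid ⟨i, hi'⟩ ⟨i + 1, hi⟩ (by simp)]

/-- The commutator subgroup of `BQ n`. -/
local notation "A" => commutator (BQ n)

lemma derivedSeries_BQ_two : derivedSeries (BQ n) 2 = ⊥ := by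
  rw [← map_derivedSeries_eq (QuotientGroup.mk'_surjective (derivedSeries (BraidGroup n) 2)) 2,
    Subgroup.map_eq_bot_iff, QuotientGroup.ker_mk']

lemma A_comm {a b : BQ n} (ha : a ∈ A) (hb : b ∈ A) : a * b = b * a := by
  have h : ⁅a, b⁆ ∈ derivedSeries (BQ n) 2 := by
    rw [show derivedSeries (BQ n) 2 = ⁅derivedSeries (BQ n) 1, derivedSeries (BQ n) 1⁆ from rfl,
      derivedSeries_one]
    exact Subgroup.commutator_mem_commutator ha hb
  rw [derivedSeries_BQ_two, Subgroup.mem_bot, commutatorElement_eq_one_iff_mul_comm] at h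
  exact h

lemma A_conj_mem {a : BQ n} (ha : a ∈ A) (g : BQ n) : g * a * g⁻¹ ∈ A :=
  Subgroup.Normal.conj_mem inferInstance a ha g

lemma adj_mem_A {i : ℕ} (hi : i + 1 < n - 1) : sq n (i + 1) * (sq n i)⁻¹ ∈ A := by
  rw [calc_conj _ _ (sq_braid hi), commutator_def]
  exact Subgroup.commutator_mem_commutator (Subgroup.mem_top _) (Subgroup.mem_top _)

lemma diff_mem_A {i j : ℕ} (hij : i ≤ j) (hj : j < n - 1) : sq n j * (sq n i)⁻¹ ∈ A := by
  induction j, hij using Nat.le_induction with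
  | base => simpa using one_mem A
  | succ j hij ih =>
    have : sq n (j + 1) * (sq n i)⁻¹ = (sq n (j + 1) * (sq n j)⁻¹) * (sq n j * (sq n i)⁻¹) := by
      group
    rw [this]
    exact mul_mem (adj_mem_A hj) (ih (by omega))

/-- The common conjugation action of the generators on `A`. -/
noncomputable def tau (n : ℕ) (x : BQ n) : BQ n := sq n 0 * x * (sq n 0)⁻¹

lemma tau_mul (x y : BQ n) : tau n (x * y) = tau n x * tau n y := by
  unfold tau; group

lemma tau_mem_A {x : BQ n} (hx : x ∈ A) : tau n x ∈ A := A_conj_mem hx _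

lemma tau_uniform {x : BQ n} (hx : x ∈ A) {i : ℕ} (hi : i < n - 1) :
    sq n i * x * (sq n i)⁻¹ = tau n x := by
  have hb : sq n i * (sq n 0)⁻¹ ∈ A := diff_mem_A (Nat.zero_le i) hi
  have hc : tau n x ∈ A := tau_mem_A hx
  have key : sq n i * x * (sq n i)⁻¹ =
      (sq n i * (sq n 0)⁻¹) * tau n x * (sq n i * (sq n 0)⁻¹)⁻¹ := by
    unfold tau; group
  rw [key, A_comm hb hc]; group

variable (hn : 6 ≤ n)
include hn

omit hn in
lemma tau_fix_diff2 {i j : ℕ} (hij : i ≤ j) (hj : j < n - 1)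
    (hcomm : sq n i * sq n j = sq n j * sq n i) :
    tau n (sq n j * (sq n i)⁻¹) = sq n j * (sq n i)⁻¹ := by
  rw [← tau_uniform (diff_mem_A hij hj) (lt_of_le_of_lt hij hj)]
  exact calc_comm_fix _ _ hcomm

omit hn in
/-- `τ` fixes `a_{i+1} a_i = s_{i+2} s_i⁻¹`. -/
lemma tau_fix_pair {i : ℕ} (hi : i + 2 < n - 1) :
    tau n ((sq n (i + 2) * (sq n (i + 1))⁻¹) * (sq n (i + 1) * (sq n i)⁻¹)) =
      (sq n (i + 2) * (sq n (i + 1))⁻¹) * (sq n (i + 1) * (sq n i)⁻¹) := by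
  have e : (sq n (i + 2) * (sq n (i + 1))⁻¹) * (sq n (i + 1) * (sq n i)⁻¹) =
      sq n (i + 2) * (sq n i)⁻¹ := by group
  rw [e]
  exact tau_fix_diff2 (by omega) hi
    (sq_comm (by omega) hi (by push_cast; rw [show (i:ℤ) - ((i:ℤ)+2) = -2 by ring]; norm_num))

lemma tau_fix_a {k : ℕ} (hk : k + 1 < n - 1) :
    tau n (sq n (k + 1) * (sq n k)⁻¹) = sq n (k + 1) * (sq n k)⁻¹ := by
  -- first: the generic case k ≥ 2
  have gen : ∀ m : ℕ, m + 3 < n - 1 →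
      tau n (sq n (m + 3) * (sq n (m + 2))⁻¹) = sq n (m + 3) * (sq n (m + 2))⁻¹ := by
    intro m hm
    have h3 : tau n (sq n (m + 3) * (sq n m)⁻¹) = sq n (m + 3) * (sq n m)⁻¹ :=
      tau_fix_diff2 (by omega) hm
        (sq_comm (by omega) hm (by push_cast; rw [show (m:ℤ) - ((m:ℤ)+3) = -3 by ring]; norm_num))
    have h2 := tau_fix_pair (n := n) (i := m) (by omega)
    have e : sq n (m + 3) * (sq n m)⁻¹ =
        (sq n (m + 3) * (sq n (m + 2))⁻¹) *
          ((sq n (m + 2) * (sq n (m + 1))⁻¹) * (sq n (m + 1) * (sq n m)⁻¹)) := by group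
    rw [e, tau_mul] at h3
    rw [h2] at h3
    exact mul_right_cancel h3
  -- a_2 is fixed (needs n ≥ 6 so that index 3 exists)
  have h5 : (5 : ℕ) ≤ n - 1 := by omega
  have ha2 : tau n (sq n 3 * (sq n 2)⁻¹) = sq n 3 * (sq n 2)⁻¹ := gen 0 (by omega)
  have ha1 : tau n (sq n 2 * (sq n 1)⁻¹) = sq n 2 * (sq n 1)⁻¹ := by
    have h2 := tau_fix_pair (n := n) (i := 1) (by omega)
    rw [tau_mul, ha2] at h2
    exact mul_left_cancel h2
  have ha0 : tau n (sq n 1 * (sq n 0)⁻¹) = sq n 1 * (sq n 0)⁻¹ := by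
    have h2 := tau_fix_pair (n := n) (i := 0) (by omega)
    rw [tau_mul, ha1] at h2
    exact mul_left_cancel h2
  match k with
  | 0 => exact ha0
  | 1 => exact ha1
  | (m + 2) => exact gen m hk

lemma a_eq_one {k : ℕ} (hk : k + 1 < n - 1) : sq n (k + 1) * (sq n k)⁻¹ = 1 := by
  set a := sq n (k + 1) * (sq n k)⁻¹ with ha
  have hmem : a ∈ A := adj_mem_A hk
  have hk' : k < n - 1 := by omega
  have ht : tau n a = a := tau_fix_a hn hk
  -- τ² a = a⁻¹ * τ a, from the braid relation
  have key : tau n (tau n a) = a⁻¹ * tau n a := by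
    rw [← tau_uniform hmem hk', ← tau_uniform (A_conj_mem hmem (sq n k)) hk']
    exact calc_braid_tau _ _ (sq_braid hk)
  rw [ht, ht] at key
  rw [key, inv_mul_cancel]

lemma sq_eq_sq_zero {k : ℕ} (hk : k < n - 1) : sq n k = sq n 0 := by
  induction k with
  | zero => rfl
  | succ m ih =>
    have h1 : sq n (m + 1) * (sq n m)⁻¹ = 1 := a_eq_one hn hk
    rw [mul_inv_eq_one] at h1
    rw [h1, ih (by omega)]

lemma BQ_mul_comm : ∀ x y : BQ n, x * y = y * x := by
  have hz : ∀ x : BQ n, x ∈ Subgroup.zpowers (sq n 0) := by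
    intro x
    obtain ⟨b, rfl⟩ := QuotientGroup.mk'_surjective (derivedSeries (BraidGroup n) 2) x
    refine PresentedGroup.generated_by (braidRels n)
      ((Subgroup.zpowers (sq n 0)).comap (QuotientGroup.mk' _)) ?_ b
    intro j
    rw [Subgroup.mem_comap]
    have : (QuotientGroup.mk' (derivedSeries (BraidGroup n) 2)) (PresentedGroup.of j)
        = sq n j.val := by
      rw [sq_of_lt j.isLt]
      rfl
    rw [this, sq_eq_sq_zero hn j.isLt]
    exact Subgroup.mem_zpowers _
  intro x y
  obtain ⟨k, hk⟩ := hz x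
  obtain ⟨m, hm⟩ := hz y
  rw [← hk, ← hm, ← zpow_add, ← zpow_add, add_comm]

lemma commutator_le_derivedSeries_two :
    commutator (BraidGroup n) ≤ derivedSeries (BraidGroup n) 2 := by
  rw [commutator_def, Subgroup.commutator_le]
  intro g _ h _
  have : (QuotientGroup.mk' (derivedSeries (BraidGroup n) 2)) ⁅g, h⁆ = 1 := by
    rw [map_commutatorElement, commutatorElement_eq_one_iff_mul_comm]
    exact BQ_mul_comm hn _ _
  rwa [← MonoidHom.mem_ker, QuotientGroup.ker_mk'] at this

lemma derivedSeries_two_eq : derivedSeries (BraidGroup n) 2 = commutator (BraidGroup n) := by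
  apply le_antisymm
  · rw [derivedSeries_succ, commutator_def]
    exact Subgroup.commutator_mono le_top le_top
  · exact commutator_le_derivedSeries_two hn

lemma derivedSeries_stable : ∀ k : ℕ, derivedSeries (BraidGroup n) (k + 1) = commutator (BraidGroup n) := by
  intro k
  induction k with
  | zero => exact derivedSeries_one _
  | succ m ih =>
    rw [derivedSeries_succ, ih, show commutator (BraidGroup n) = derivedSeries (BraidGroup n) 1
      from (derivedSeries_one _).symm, ← derivedSeries_succ, derivedSeries_two_eq hn]
    exact derivedSeries_one _

/-- `K_n` is a perfect group for `n ≥ 6`. -/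
lemma commutator_K_top :
    commutator (↥(commutator (BraidGroup n))) = ⊤ := by
  set K := commutator (BraidGroup n) with hK
  apply Subgroup.map_injective (K.subtype_injective)
  have htop : Subgroup.map K.subtype ⊤ = K := by
    rw [← MonoidHom.range_eq_map, K.range_subtype]
  rw [htop, commutator_def, Subgroup.map_commutator, htop]
  have : ⁅K, K⁆ = derivedSeries (BraidGroup n) 2 := by
    rw [hK, ← derivedSeries_one (BraidGroup n)]; rfl
  rw [this, show derivedSeries (BraidGroup n) 2 = derivedSeries (BraidGroup n) (1 + 1) from rfl,
    derivedSeries_stable hn 1]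

lemma derivedSeries_K_top (k : ℕ) :
    derivedSeries (↥(commutator (BraidGroup n))) k = ⊤ := by
  induction k with
  | zero => exact derivedSeries_zero _
  | succ m ih =>
    rw [derivedSeries_succ, ih, ← commutator_def, commutator_K_top hn]

end Braid

end BraidAux

/-- For `n ≥ 6` and a solvable group `S`, every homomorphism from the commutator subgroup
of the braid group into `S` is trivial. -/
theorem hom_Kn_solvable_trivial (n : ℕ) (hn : 6 ≤ n) (S : Type) [Group S] [Group.IsSolvable S]
    (f : ↥(commutator (BraidGroup n)) →* S) :
    ∀ x, f x = 1 := by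
  intro x
  obtain ⟨m, hm⟩ := Group.IsSolvable.solvable (G := S)
  have hx : x ∈ derivedSeries (↥(commutator (BraidGroup n))) m := by
    rw [BraidAux.derivedSeries_K_top hn]; trivial
  have : f x ∈ derivedSeries S m :=
    map_derivedSeries_le_derivedSeries f m ⟨x, hx, rfl⟩
  rwa [hm, Subgroup.mem_bot] at this
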